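/- Let E and E' be traces of lengths i and i' respectively, in which every event occurs at most once, and suppose that for every thread t the projections of E and E' onto t are equal. Then there exists a bijection π from {1,…,i} to {1,…,i'} such that for every j ≤ i, the event at position j in E equals the event at position π(j) in E'. -/

import Mathlib

/-- Projection of a trace onto thread `t`. -/
def proj {T A : Type} [DecidableEq T] (E : List (T × A)) (t : T) : List (T × A) :=
  E.filter (fun e => e.1 = t)

/-- For duplicate-free traces with equal per-thread projections there is a
bijection between positions matching equal events. -/
theorem exists_bijection_of_proj_eq {T A : Type} [DecidableEq T]
    (E E' : List (T × A)) (hE : E.Nodup) (hE' : E'.Nodup)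
    (h : ∀ t : T, proj E t = proj E' t) :
    ∃ π : Fin E.length ≃ Fin E'.length, ∀ j : Fin E.length, E.get j = E'.get (π j) := by
  classical
  have hmem : ∀ e : T × A, e ∈ E ↔ e ∈ E' := by
    intro e
    constructor
    · intro he
      have : e ∈ proj E e.1 := by
        simp [proj, List.mem_filter, he]
      rw [h e.1] at this
      exact (List.mem_filter.mp this).1
    · intro he
      have : e ∈ proj E' e.1 := by
        simp [proj, List.mem_filter, he]
      rw [← h e.1] at this
      exact (List.mem_filter.mp this).1
  have hperm : E.Perm E' := (List.perm_ext_iff_of_nodup hE hE').mpr hmem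
  have hlen : E.length = E'.length := hperm.length_eq
  haveI : DecidableEq (T × A) := Classical.decEq _
  have hidx : ∀ j : Fin E.length, @List.idxOf _ instBEqOfDecidableEq (E.get j) E' < E'.length := by
    intro j
    exact (@List.idxOf_lt_length_iff _ instBEqOfDecidableEq _ _ _).mpr ((hmem _).mp (E.get_mem j))
  let f : Fin E.length → Fin E'.length := fun j => ⟨@List.idxOf _ instBEqOfDecidableEq (E.get j) E', hidx j⟩
  have hgetf : ∀ j : Fin E.length, E'.get (f j) = E.get j := by
    intro j
    exact @List.idxOf_get _ instBEqOfDecidableEq _ _ _ (hidx j)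
  have hinj : Function.Injective f := by
    intro a b hab
    have : E.get a = E.get b := by
      rw [← hgetf a, ← hgetf b, hab]
    exact (List.nodup_iff_injective_get.mp hE) this
  have hbij : Function.Bijective f := by
    have : Fintype.card (Fin E.length) = Fintype.card (Fin E'.length) := by simp [hlen]
    exact (Fintype.bijective_iff_injective_and_card f).mpr ⟨hinj, this⟩
  exact ⟨Equiv.ofBijective f hbij, fun j => (hgetf j).symm⟩
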